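/- Let Φ : ℝ → [0,∞) be a convex function and let φ = (φ_1, …, φ_n) be random variables with A_k ≤ φ_k ≤ B_k almost surely, where A_k < 0 < B_k. Then for any integer d ≤ n and any real coefficients a_1, …, a_n, there exist a probability space and random variables ξ_1, …, ξ_n on it, each taking only the two values A_k and B_k with mean zero and any d of them mutually independent, such that E[Φ(Σ_{k=1}^n a_k φ_k)] ≤ (1 + μ_d(φ)) · E[Φ(Σ_{k=1}^n a_k ξ_k)]. -/

import Mathlib

open MeasureTheory ProbabilityTheory

namespace ExtremeAux
noncomputable section
open Finset
open scoped Classical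

variable {n : ℕ}

/-- value of the two-point variable -/
def vv (lo hi : Fin n → ℝ) (k : Fin n) (b : Bool) : ℝ := if b then hi k else lo k

/-- the two-point probabilities -/
def pp (lo hi : Fin n → ℝ) (k : Fin n) (b : Bool) : ℝ :=
  if b then -lo k / (hi k - lo k) else hi k / (hi k - lo k)

def uu (lo hi : Fin n → ℝ) (k : Fin n) (b : Bool) : ℝ := vv lo hi k b / (-lo k * hi k)

def lam (lo hi : Fin n → ℝ) (k : Fin n) (x : ℝ) (b : Bool) : ℝ :=
  if b then (x - lo k) / (hi k - lo k) else (hi k - x) / (hi k - lo k)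

def PP (lo hi : Fin n → ℝ) (ε : Fin n → Bool) : ℝ := ∏ k, pp lo hi k (ε k)

theorem sum_prod (g : Fin n → Bool → ℝ) :
    ∑ ε : Fin n → Bool, ∏ k, g k (ε k) = ∏ k, (g k true + g k false) := by
  classical
  rw [← Fintype.piFinset_univ, ← Finset.prod_univ_sum]
  simp

theorem vanish (g : Fin n → Bool → ℝ) (j : Fin n) (hj : g j true + g j false = 0) :
    ∑ ε : Fin n → Bool, ∏ k, g k (ε k) = 0 := by
  rw [sum_prod]
  exact Finset.prod_eq_zero (Finset.mem_univ j) hj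

section facts

variable {lo hi : Fin n → ℝ} (hlo : ∀ k, lo k < 0) (hhi : ∀ k, 0 < hi k)
include hlo hhi

theorem hl_sub (k : Fin n) : 0 < hi k - lo k := by have := hlo k; have := hhi k; linarith

theorem pp_nonneg (k : Fin n) (b : Bool) : 0 ≤ pp lo hi k b := by
  have h1 := hl_sub hlo hhi k
  have := hlo k; have := hhi k
  cases b <;> simp only [pp, if_true, if_false] <;> apply div_nonneg <;> linarith

theorem pp_le_one (k : Fin n) (b : Bool) : pp lo hi k b ≤ 1 := by
  have h1 := hl_sub hlo hhi k
  have := hlo k; have := hhi k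
  cases b <;> simp [pp, div_le_one h1] <;> linarith

theorem pp_sum (k : Fin n) : pp lo hi k true + pp lo hi k false = 1 := by
  have h1 := (hl_sub hlo hhi k).ne'
  simp only [pp, if_true, if_false, Bool.false_eq_true, Bool.true_eq_false]
  rw [← add_div, div_eq_one_iff_eq h1]; ring

theorem pp_vv (k : Fin n) :
    pp lo hi k true * vv lo hi k true + pp lo hi k false * vv lo hi k false = 0 := by
  have h1 := (hl_sub hlo hhi k).ne'
  simp only [pp, vv, if_true, if_false, Bool.false_eq_true, Bool.true_eq_false]
  ring

theorem pp_uu (k : Fin n) :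
    pp lo hi k true * uu lo hi k true + pp lo hi k false * uu lo hi k false = 0 := by
  have := pp_vv hlo hhi k
  simp only [uu, div_eq_mul_inv, ← mul_assoc, ← add_mul, this, zero_mul]

theorem lam_eq (k : Fin n) (x : ℝ) (b : Bool) :
    lam lo hi k x b = pp lo hi k b * (1 + uu lo hi k b * x) := by
  have h1 := (hl_sub hlo hhi k).ne'
  have h2 := (hlo k).ne
  have h3 := (hhi k).ne'
  cases b <;>
    simp only [lam, pp, uu, vv, if_true, if_false, Bool.false_eq_true, Bool.true_eq_false] <;>
    field_simp <;> ring

theorem lam_sum (k : Fin n) (x : ℝ) : lam lo hi k x true + lam lo hi k x false = 1 := by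
  have h1 := (hl_sub hlo hhi k).ne'
  simp only [lam, if_true, if_false, Bool.false_eq_true, Bool.true_eq_false]
  rw [← add_div, div_eq_one_iff_eq h1]; ring

theorem lam_vv (k : Fin n) (x : ℝ) :
    lam lo hi k x true * vv lo hi k true + lam lo hi k x false * vv lo hi k false = x := by
  have h1 := (hl_sub hlo hhi k).ne'
  simp only [lam, vv, if_true, if_false, Bool.false_eq_true, Bool.true_eq_false]
  rw [div_mul_eq_mul_div, div_mul_eq_mul_div, ← add_div, div_eq_iff h1]; ring

theorem lam_nonneg (k : Fin n) {x : ℝ} (h1 : lo k ≤ x) (h2 : x ≤ hi k) (b : Bool) :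
    0 ≤ lam lo hi k x b := by
  have h3 := hl_sub hlo hhi k
  cases b <;> simp [lam] <;> [skip; skip] <;> apply div_nonneg <;> linarith

theorem lam_le_one (k : Fin n) {x : ℝ} (h1 : lo k ≤ x) (h2 : x ≤ hi k) (b : Bool) :
    lam lo hi k x b ≤ 1 := by
  have h3 := hl_sub hlo hhi k
  cases b <;> simp [lam, div_le_one h3] <;> linarith

theorem abs_uu_le (k : Fin n) (b : Bool) :
    |uu lo hi k b| ≤ (min (-lo k) (hi k))⁻¹ := by
  have h2 := hlo k; have h3 := hhi k
  have hm : 0 < min (-lo k) (hi k) := lt_min (by linarith) h3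
  have hd : 0 < -lo k * hi k := mul_pos (by linarith) h3
  cases b
  · simp only [uu, vv, if_false, Bool.false_eq_true]
    rw [abs_div, abs_of_pos hd, abs_of_neg h2, div_le_iff₀ hd]
    rw [inv_mul_eq_div, le_div_iff₀ hm]
    calc -lo k * min (-lo k) (hi k) ≤ -lo k * hi k :=
          mul_le_mul_of_nonneg_left (min_le_right _ _) (by linarith)
      _ = -lo k * hi k := rfl
  · simp only [uu, vv, if_true]
    rw [abs_div, abs_of_pos hd, abs_of_pos h3, div_le_iff₀ hd]
    rw [inv_mul_eq_div, le_div_iff₀ hm]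
    calc hi k * min (-lo k) (hi k) ≤ hi k * -lo k :=
          mul_le_mul_of_nonneg_left (min_le_left _ _) (by linarith)
      _ = -lo k * hi k := by ring

theorem PP_nonneg (ε : Fin n → Bool) : 0 ≤ PP lo hi ε :=
  Finset.prod_nonneg fun k _ => pp_nonneg hlo hhi k (ε k)

end facts

section core

def small (d : ℕ) : Finset (Finset (Fin n)) :=
  Finset.univ.filter (fun A : Finset (Fin n) => A.Nonempty ∧ A.card ≤ d)

def Mconst (lo hi : Fin n → ℝ) (d : ℕ) (EA : Finset (Fin n) → ℝ) : ℝ :=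
  ∑ A ∈ small d, (∏ j ∈ A, (min (-(lo j)) (hi j))⁻¹) * |EA A|

def Sfun (lo hi : Fin n → ℝ) (d : ℕ) (EA : Finset (Fin n) → ℝ) (ε : Fin n → Bool) : ℝ :=
  ∑ A ∈ small d, (∏ j ∈ A, uu lo hi j (ε j)) * EA A

def Tfun (lo hi : Fin n → ℝ) (EA : Finset (Fin n) → ℝ) (ε : Fin n → Bool) : ℝ :=
  ∑ A : Finset (Fin n), (∏ j ∈ A, uu lo hi j (ε j)) * EA A

def Qfun (lo hi : Fin n → ℝ) (d : ℕ) (EA : Finset (Fin n) → ℝ) (ε : Fin n → Bool) : ℝ :=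
  PP lo hi ε * (Tfun lo hi EA ε + (Mconst lo hi d EA - Sfun lo hi d EA ε)) / (1 + Mconst lo hi d EA)

variable {lo hi : Fin n → ℝ} (d : ℕ) (EA : Finset (Fin n) → ℝ)
variable (hlo : ∀ k, lo k < 0) (hhi : ∀ k, 0 < hi k)
include hlo hhi

theorem Mconst_nonneg : 0 ≤ Mconst lo hi d EA := by
  apply Finset.sum_nonneg
  intro A _
  apply mul_nonneg _ (abs_nonneg _)
  apply Finset.prod_nonneg
  intro j _
  have : 0 < min (-(lo j)) (hi j) := lt_min (by have := hlo j; linarith) (hhi j)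
  positivity

theorem abs_Sfun_le (ε : Fin n → Bool) : |Sfun lo hi d EA ε| ≤ Mconst lo hi d EA := by
  refine (Finset.abs_sum_le_sum_abs _ _).trans ?_
  apply Finset.sum_le_sum
  intro A _
  rw [abs_mul, abs_prod]
  apply mul_le_mul_of_nonneg_right _ (abs_nonneg _)
  apply Finset.prod_le_prod (fun j _ => abs_nonneg _)
  intro j _
  exact abs_uu_le hlo hhi j (ε j)

theorem one_add_M_pos : 0 < 1 + Mconst lo hi d EA := by
  have := Mconst_nonneg d EA hlo hhi; linarith

/-- the master computation -/
theorem core_sum (hEA : EA ∅ = 1) (K : Finset (Fin n)) (hK : K.card ≤ d)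
    (f : Fin n → Bool → ℝ) :
    ∑ ε : Fin n → Bool, Qfun lo hi d EA ε * ∏ k ∈ K, f k (ε k)
      = ∏ k ∈ K, (pp lo hi k true * f k true + pp lo hi k false * f k false) := by
  classical
  set M := Mconst lo hi d EA with hM
  have hMpos := one_add_M_pos d EA hlo hhi
  -- `val A`
  set val : Finset (Fin n) → ℝ :=
    fun A => ∑ ε : Fin n → Bool,
      (PP lo hi ε * ∏ j ∈ A, uu lo hi j (ε j)) * ∏ k ∈ K, f k (ε k) with hval
  set R : ℝ := ∏ k ∈ K, (pp lo hi k true * f k true + pp lo hi k false * f k false) with hR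
  -- product form of the summand
  have hprod : ∀ (A : Finset (Fin n)) (ε : Fin n → Bool),
      (PP lo hi ε * ∏ j ∈ A, uu lo hi j (ε j)) * ∏ k ∈ K, f k (ε k)
        = ∏ m, (pp lo hi m (ε m) *
            ((if m ∈ A then uu lo hi m (ε m) else 1) * (if m ∈ K then f m (ε m) else 1))) := by
    intro A ε
    rw [Finset.prod_mul_distrib, Finset.prod_mul_distrib, Finset.prod_ite_mem,
      Finset.prod_ite_mem, Finset.univ_inter, Finset.univ_inter, PP]
    ring
  -- vanishing for big sets
  have hval_big : ∀ A : Finset (Fin n), A.Nonempty → d < A.card → val A = 0 := by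
    intro A hA hcard
    have hnotsub : ¬ A ⊆ K := fun hsub => absurd (Finset.card_le_card hsub) (by omega)
    obtain ⟨j, hjA, hjK⟩ := Finset.not_subset.1 hnotsub
    rw [hval]
    simp only [hprod]
    apply vanish
      (fun m b => pp lo hi m b *
        ((if m ∈ A then uu lo hi m b else 1) * (if m ∈ K then f m b else 1))) j
    simp only [if_pos hjA, if_neg hjK, mul_one]
    exact pp_uu hlo hhi j
  -- empty set value
  have hval_empty : val ∅ = R := by
    rw [hval]
    simp only [hprod]
    rw [sum_prod (fun m b => pp lo hi m b *
        ((if m ∈ (∅ : Finset (Fin n)) then uu lo hi m b else 1) * (if m ∈ K then f m b else 1)))]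
    have step : ∀ m : Fin n,
        (pp lo hi m true * ((if m ∈ (∅ : Finset (Fin n)) then uu lo hi m true else 1)
            * (if m ∈ K then f m true else 1)) +
         pp lo hi m false * ((if m ∈ (∅ : Finset (Fin n)) then uu lo hi m false else 1)
            * (if m ∈ K then f m false else 1)))
        = if m ∈ K then pp lo hi m true * f m true + pp lo hi m false * f m false else 1 := by
      intro m
      by_cases hm : m ∈ K
      · simp [hm]
      · simp [hm, pp_sum hlo hhi m]
    rw [Finset.prod_congr rfl (fun m _ => step m), Finset.prod_ite_mem, Finset.univ_inter, hR]
  -- the three pieces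
  have hT : ∑ ε : Fin n → Bool, PP lo hi ε * Tfun lo hi EA ε * ∏ k ∈ K, f k (ε k)
      = ∑ A : Finset (Fin n), EA A * val A := by
    have step : ∀ ε : Fin n → Bool, PP lo hi ε * Tfun lo hi EA ε * ∏ k ∈ K, f k (ε k)
        = ∑ A : Finset (Fin n),
            EA A * ((PP lo hi ε * ∏ j ∈ A, uu lo hi j (ε j)) * ∏ k ∈ K, f k (ε k)) := by
      intro ε
      rw [Tfun, Finset.mul_sum, Finset.sum_mul]
      exact Finset.sum_congr rfl fun A _ => by ring
    rw [Finset.sum_congr rfl (fun ε _ => step ε), Finset.sum_comm]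
    exact Finset.sum_congr rfl fun A _ => by rw [hval, Finset.mul_sum]
  have hS : ∑ ε : Fin n → Bool, PP lo hi ε * Sfun lo hi d EA ε * ∏ k ∈ K, f k (ε k)
      = ∑ A ∈ small d, EA A * val A := by
    have step : ∀ ε : Fin n → Bool, PP lo hi ε * Sfun lo hi d EA ε * ∏ k ∈ K, f k (ε k)
        = ∑ A ∈ small d,
            EA A * ((PP lo hi ε * ∏ j ∈ A, uu lo hi j (ε j)) * ∏ k ∈ K, f k (ε k)) := by
      intro ε
      rw [Sfun, Finset.mul_sum, Finset.sum_mul]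
      exact Finset.sum_congr rfl fun A _ => by ring
    rw [Finset.sum_congr rfl (fun ε _ => step ε), Finset.sum_comm]
    exact Finset.sum_congr rfl fun A _ => by rw [hval, Finset.mul_sum]
  have hM1 : ∑ ε : Fin n → Bool, PP lo hi ε * ∏ k ∈ K, f k (ε k) = val ∅ := by
    rw [hval]
    exact Finset.sum_congr rfl fun ε _ => by simp
  have hsplit : ∑ A : Finset (Fin n), EA A * val A
      = (∑ A ∈ small d, EA A * val A) + R := by
    rw [← Finset.sum_filter_add_sum_filter_not Finset.univ
      (fun A : Finset (Fin n) => A.Nonempty ∧ A.card ≤ d) (fun A => EA A * val A)]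
    congr 1
    rw [Finset.sum_eq_single_of_mem (∅ : Finset (Fin n))
      (by simp [Finset.not_nonempty_empty])]
    · rw [hval_empty, hEA, one_mul]
    · intro A hA hAne
      have h1 : A.Nonempty := Finset.nonempty_iff_ne_empty.2 hAne
      have h2 : ¬(A.Nonempty ∧ A.card ≤ d) := (Finset.mem_filter.1 hA).2
      have h3 : d < A.card := by
        by_contra h
        exact h2 ⟨h1, by omega⟩
      rw [hval_big A h1 h3, mul_zero]
  have expand : ∀ ε : Fin n → Bool, Qfun lo hi d EA ε * ∏ k ∈ K, f k (ε k)
      = (PP lo hi ε * Tfun lo hi EA ε * ∏ k ∈ K, f k (ε k)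
          + (M * (PP lo hi ε * ∏ k ∈ K, f k (ε k))
             - PP lo hi ε * Sfun lo hi d EA ε * ∏ k ∈ K, f k (ε k))) / (1 + M) := by
    intro ε
    rw [Qfun, ← hM]
    ring
  rw [Finset.sum_congr rfl (fun ε _ => expand ε), ← Finset.sum_div,
    Finset.sum_add_distrib, Finset.sum_sub_distrib, ← Finset.mul_sum, hT, hS, hM1, hsplit,
    hval_empty]
  rw [div_eq_iff (by rw [← hM] at hMpos; exact hMpos.ne')]
  ring

theorem le_Qfun (ε : Fin n → Bool) :
    PP lo hi ε * Tfun lo hi EA ε ≤ (1 + Mconst lo hi d EA) * Qfun lo hi d EA ε := by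
  have hMpos := one_add_M_pos d EA hlo hhi
  rw [Qfun, mul_div_cancel₀ _ hMpos.ne']
  have h1 : 0 ≤ PP lo hi ε := PP_nonneg hlo hhi ε
  have h2 : Sfun lo hi d EA ε ≤ Mconst lo hi d EA :=
    (le_abs_self _).trans (abs_Sfun_le d EA hlo hhi ε)
  nlinarith [mul_nonneg h1 (sub_nonneg.2 h2)]

theorem Qfun_nonneg (ε : Fin n → Bool) (hPT : 0 ≤ PP lo hi ε * Tfun lo hi EA ε) :
    0 ≤ Qfun lo hi d EA ε := by
  have hMpos := one_add_M_pos d EA hlo hhi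
  rw [Qfun]
  apply div_nonneg _ hMpos.le
  have h1 : 0 ≤ PP lo hi ε := PP_nonneg hlo hhi ε
  have h2 : Sfun lo hi d EA ε ≤ Mconst lo hi d EA :=
    (le_abs_self _).trans (abs_Sfun_le d EA hlo hhi ε)
  nlinarith [mul_nonneg h1 (sub_nonneg.2 h2)]

theorem Qfun_sum (hEA : EA ∅ = 1) : ∑ ε : Fin n → Bool, Qfun lo hi d EA ε = 1 := by
  have := core_sum d EA hlo hhi hEA ∅ (by simp) (fun _ _ => 1)
  simpa using this

theorem Qfun_mean (hEA : EA ∅ = 1) (hd : 0 < d) (k : Fin n) :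
    ∑ ε : Fin n → Bool, Qfun lo hi d EA ε * vv lo hi k (ε k) = 0 := by
  have := core_sum d EA hlo hhi hEA {k} (by rw [Finset.card_singleton]; exact hd) (fun m b => vv lo hi m b)
  simp only [Finset.prod_singleton] at this
  rw [this, pp_vv hlo hhi k]

end core

section cube

/-- the cube with the `⊤` σ-algebra -/
def Cube (n : ℕ) : Type := Fin n → Bool

instance : MeasurableSpace (Cube n) := ⊤
instance : MeasurableSingletonClass (Cube n) := ⟨fun _ => MeasurableSpace.measurableSet_top⟩
instance : Fintype (Cube n) := inferInstanceAs (Fintype (Fin n → Bool))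
instance : DecidableEq (Cube n) := fun f g => Fintype.decidablePiFintype f g

/-- the measure on the cube given by a density `Q` -/
def cubeMeasure (Q : Cube n → ℝ) : Measure (Cube n) :=
  ∑ ε : Cube n, ENNReal.ofReal (Q ε) • Measure.dirac ε

variable (Q : Cube n → ℝ) (hQ0 : ∀ ε, 0 ≤ Q ε)
include hQ0

theorem cubeMeasure_apply (G : Set (Cube n)) :
    cubeMeasure Q G = ENNReal.ofReal (∑ ε : Cube n, Q ε * (if ε ∈ G then 1 else 0)) := by
  classical
  rw [cubeMeasure, Measure.finset_sum_apply]
  rw [ENNReal.ofReal_sum_of_nonneg (fun ε _ => mul_nonneg (hQ0 ε) (by split <;> norm_num))]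
  apply Finset.sum_congr rfl
  intro ε _
  rw [Measure.smul_apply, Measure.dirac_apply' _ MeasurableSpace.measurableSet_top,
    smul_eq_mul, Set.indicator_apply]
  by_cases hε : ε ∈ G <;> simp [hε, ENNReal.ofReal_ne_top]

theorem cubeMeasure_isProb (hQ1 : ∑ ε : Cube n, Q ε = 1) :
    IsProbabilityMeasure (cubeMeasure Q) := by
  constructor
  rw [cubeMeasure_apply Q hQ0]
  simp [hQ1]

theorem cubeMeasure_integral (hQ1 : ∑ ε : Cube n, Q ε = 1) (f : Cube n → ℝ) :
    ∫ x, f x ∂(cubeMeasure Q) = ∑ ε : Cube n, Q ε * f ε := by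
  classical
  haveI := cubeMeasure_isProb Q hQ0 hQ1
  rw [integral_fintype .of_finite]
  apply Finset.sum_congr rfl
  intro ε _
  have hsing : cubeMeasure Q {ε} = ENNReal.ofReal (Q ε) := by
    rw [cubeMeasure_apply Q hQ0]
    congr 1
    rw [Finset.sum_eq_single_of_mem ε (Finset.mem_univ ε)]
    · simp
    · intro b _ hb
      simp [Set.mem_singleton_iff, hb]
  rw [measureReal_def, hsing, smul_eq_mul, ENNReal.toReal_ofReal (hQ0 ε)]

end cube

section indep

variable {lo hi : Fin n → ℝ}

theorem cube_indep (hlo : ∀ k, lo k < 0) (hhi : ∀ k, 0 < hi k)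
    (d : ℕ) (hd : 0 < d) (Q : Cube n → ℝ) (hQ0 : ∀ ε, 0 ≤ Q ε)
    (hcore : ∀ (K : Finset (Fin n)), K.card ≤ d → ∀ f : Fin n → Bool → ℝ,
      ∑ ε : Cube n, Q ε * ∏ k ∈ K, f k (ε k)
        = ∏ k ∈ K, (pp lo hi k true * f k true + pp lo hi k false * f k false))
    (S : Finset (Fin n)) (hS : S.card ≤ d) :
    iIndepFun
      (fun (i : S) (ε : Cube n) => vv lo hi i (ε i)) (cubeMeasure Q) := by
  classical
  rw [iIndepFun_iff_measure_inter_preimage_eq_mul]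
  intro T sets _
  set ξ : S → Cube n → ℝ := fun i ε => vv lo hi i (ε i) with hξ
  set F : Fin n → Bool → ℝ := fun k b =>
    if h : k ∈ S then (if vv lo hi k b ∈ sets ⟨k, h⟩ then 1 else 0) else 1 with hF
  set pE : Fin n → ℝ := fun k =>
    pp lo hi k true * F k true + pp lo hi k false * F k false with hpE
  have hFi : ∀ (i : S) (b : Bool), F (i : Fin n) b = if vv lo hi i b ∈ sets i then 1 else 0 := by
    intro i b
    rw [hF]
    simp only [i.2, dif_pos, Subtype.coe_eta]
  -- single sets
  have hsingle : ∀ i : S,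
      cubeMeasure Q (ξ i ⁻¹' sets i) = ENNReal.ofReal (pE (i : Fin n)) := by
    intro i
    rw [cubeMeasure_apply Q hQ0]
    congr 1
    have hcard : ({(i : Fin n)} : Finset (Fin n)).card ≤ d := by rw [Finset.card_singleton]; exact hd
    have h1 := hcore {(i : Fin n)} hcard F
    simp only [Finset.prod_singleton] at h1
    have h2 : (∑ ε : Cube n, Q ε * if ε ∈ ξ i ⁻¹' sets i then (1:ℝ) else 0)
        = ∑ ε : Cube n, Q ε * F (i : Fin n) (ε i) := by
      apply Finset.sum_congr rfl
      intro ε _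
      congr 1
      rw [hFi i (ε i)]
      by_cases hε : ε ∈ ξ i ⁻¹' sets i
      · rw [if_pos hε]
        exact (if_pos (show vv lo hi (i : Fin n) (ε i) ∈ sets i from hε)).symm
      · rw [if_neg hε]
        exact (if_neg (fun hmem => hε hmem)).symm
    exact h2.trans h1
  -- the image of T in `Fin n`
  set K : Finset (Fin n) := T.image Subtype.val with hK
  have hinj : ∀ x ∈ T, ∀ y ∈ T, (x : Fin n) = (y : Fin n) → x = y :=
    fun x _ y _ h => Subtype.ext h
  have hKcard : K.card ≤ d := by
    calc K.card ≤ T.card := Finset.card_image_le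
      _ ≤ Fintype.card S := Finset.card_le_univ T
      _ = S.card := Fintype.card_coe S
      _ ≤ d := hS
  have hmain : cubeMeasure Q (⋂ i ∈ T, ξ i ⁻¹' sets i)
      = ENNReal.ofReal (∏ k ∈ K, pE k) := by
    rw [cubeMeasure_apply Q hQ0]
    congr 1
    rw [← hcore K hKcard F]
    apply Finset.sum_congr rfl
    intro ε _
    congr 1
    rw [hK, Finset.prod_image hinj]
    by_cases h : ε ∈ ⋂ i ∈ T, ξ i ⁻¹' sets i
    · rw [if_pos h]
      symm
      apply Finset.prod_eq_one
      intro i hiT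
      rw [hFi i (ε i)]
      exact if_pos (show vv lo hi (i : Fin n) (ε i) ∈ sets i from Set.mem_iInter₂.1 h i hiT)
    · rw [if_neg h]
      symm
      have : ∃ i ∈ T, ε ∉ ξ i ⁻¹' sets i := by
        by_contra hc
        push_neg at hc
        exact h (Set.mem_iInter₂.2 hc)
      obtain ⟨i, hiT, hi⟩ := this
      apply Finset.prod_eq_zero hiT
      rw [hFi i (ε i)]
      exact if_neg (fun hmem => hi hmem)
  have hpE0 : ∀ k, 0 ≤ pE k := by
    intro k
    rw [hpE]
    have h1 := pp_nonneg hlo hhi k true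
    have h2 := pp_nonneg hlo hhi k false
    have h3 : ∀ b, (0:ℝ) ≤ F k b := by
      intro b
      simp only [hF]
      split
      · split <;> norm_num
      · norm_num
    have := h3 true; have := h3 false
    positivity
  rw [hmain, ENNReal.ofReal_prod_of_nonneg (fun k _ => hpE0 k), hK,
    Finset.prod_image hinj]
  apply Finset.prod_congr rfl
  intro i _
  rw [hsingle i]

end indep

section omegaSide

variable {lo hi : Fin n → ℝ} (hlo : ∀ k, lo k < 0) (hhi : ∀ k, 0 < hi k)
include hlo hhi

theorem jensen_pt (Φ : ℝ → ℝ) (hΦconv : ConvexOn ℝ Set.univ Φ) (a x : Fin n → ℝ)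
    (hx : ∀ k, lo k ≤ x k ∧ x k ≤ hi k) :
    Φ (∑ k, a k * x k) ≤ ∑ ε : Fin n → Bool,
      (∏ k, lam lo hi k (x k) (ε k)) * Φ (∑ k, a k * vv lo hi k (ε k)) := by
  classical
  set wts : (Fin n → Bool) → ℝ := fun ε => ∏ k, lam lo hi k (x k) (ε k) with hwts
  set y : (Fin n → Bool) → ℝ := fun ε => ∑ k, a k * vv lo hi k (ε k) with hy
  have h0 : ∀ ε ∈ Finset.univ, 0 ≤ wts ε := fun ε _ =>
    Finset.prod_nonneg fun k _ => lam_nonneg hlo hhi k (hx k).1 (hx k).2 (ε k)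
  have h1 : ∑ ε : Fin n → Bool, wts ε = 1 := by
    rw [hwts]
    rw [sum_prod (fun k b => lam lo hi k (x k) b)]
    rw [Finset.prod_congr rfl (fun k _ => lam_sum hlo hhi k (x k))]
    exact Finset.prod_const_one
  have hj := hΦconv.map_sum_le h0 h1 (fun ε _ => Set.mem_univ (y ε))
  simp only [smul_eq_mul] at hj
  have hinner : ∀ k, ∑ ε : Fin n → Bool, wts ε * vv lo hi k (ε k) = x k := by
    intro k
    have hform : ∀ ε : Fin n → Bool, wts ε * vv lo hi k (ε k)
        = ∏ m, (lam lo hi m (x m) (ε m) * (if m = k then vv lo hi k (ε m) else 1)) := by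
      intro ε
      rw [Finset.prod_mul_distrib, Finset.prod_ite_eq' Finset.univ k
        (fun m => vv lo hi k (ε m))]
      simp [hwts]
    rw [Finset.sum_congr rfl (fun ε _ => hform ε),
      sum_prod (fun m b => lam lo hi m (x m) b * (if m = k then vv lo hi k b else 1))]
    have step : ∀ m : Fin n,
        (lam lo hi m (x m) true * (if m = k then vv lo hi k true else 1) +
         lam lo hi m (x m) false * (if m = k then vv lo hi k false else 1))
        = if m = k then x m else 1 := by
      intro m
      by_cases hm : m = k
      · subst hm
        simp [lam_vv hlo hhi m (x m)]
      · simp [hm, lam_sum hlo hhi m (x m)]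
    rw [Finset.prod_congr rfl (fun m _ => step m), Finset.prod_ite_eq' Finset.univ k
      (fun m => x m)]
    simp
  have heq : ∑ ε : Fin n → Bool, wts ε * y ε = ∑ k, a k * x k := by
    have expand : ∀ ε : Fin n → Bool, wts ε * y ε
        = ∑ k, a k * (wts ε * vv lo hi k (ε k)) := by
      intro ε
      rw [hy, Finset.mul_sum]
      exact Finset.sum_congr rfl fun k _ => by ring
    rw [Finset.sum_congr rfl (fun ε _ => expand ε), Finset.sum_comm]
    apply Finset.sum_congr rfl
    intro k _
    rw [← Finset.mul_sum, hinner k]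
  rw [heq] at hj
  exact hj

variable {Ω : Type*} [MeasurableSpace Ω] (μ : Measure Ω) [IsProbabilityMeasure μ]
  (φ : Fin n → Ω → ℝ) (hφmeas : ∀ k, Measurable (φ k))
  (hbound : ∀ k, ∀ᵐ ω ∂μ, lo k ≤ φ k ω ∧ φ k ω ≤ hi k)

include hbound hφmeas

omit hlo hhi in
theorem integrable_prod_phi (A : Finset (Fin n)) :
    Integrable (fun ω => ∏ j ∈ A, φ j ω) μ := by
  have hmeas : Measurable fun ω => ∏ j ∈ A, φ j ω :=
    Finset.measurable_prod A fun j _ => hφmeas j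
  apply Integrable.mono' (integrable_const (∏ j ∈ A, max (-(lo j)) (hi j)))
    hmeas.aestronglyMeasurable
  filter_upwards [ae_all_iff.2 hbound] with ω hω
  rw [Real.norm_eq_abs, abs_prod]
  apply Finset.prod_le_prod (fun j _ => abs_nonneg _)
  intro j _
  rw [abs_le]
  constructor
  · have := (hω j).1
    have h2 : -(max (-(lo j)) (hi j)) ≤ lo j := by
      have := le_max_left (-(lo j)) (hi j); linarith
    linarith
  · exact (hω j).2.trans (le_max_right _ _)

theorem integral_prod_lam (ε : Fin n → Bool) :
    ∫ ω, ∏ k, lam lo hi k (φ k ω) (ε k) ∂μ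
      = PP lo hi ε * Tfun lo hi (fun A => ∫ ω, ∏ j ∈ A, φ j ω ∂μ) ε := by
  classical
  have hInt := integrable_prod_phi μ φ hφmeas hbound
  have hpt : ∀ ω, ∏ k, lam lo hi k (φ k ω) (ε k)
      = ∑ A : Finset (Fin n), (PP lo hi ε * ∏ j ∈ A, uu lo hi j (ε j)) * ∏ j ∈ A, φ j ω := by
    intro ω
    calc ∏ k, lam lo hi k (φ k ω) (ε k)
        = ∏ k, (pp lo hi k (ε k) * (1 + uu lo hi k (ε k) * φ k ω)) :=
          Finset.prod_congr rfl fun k _ => lam_eq hlo hhi k (φ k ω) (ε k)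
      _ = PP lo hi ε * ∏ k, (uu lo hi k (ε k) * φ k ω + 1) := by
          rw [Finset.prod_mul_distrib]
          congr 1
          exact Finset.prod_congr rfl fun k _ => by ring
      _ = PP lo hi ε * ∑ A ∈ (Finset.univ : Finset (Fin n)).powerset,
            (∏ j ∈ A, uu lo hi j (ε j) * φ j ω) * ∏ j ∈ Finset.univ \ A, 1 := by
          rw [Finset.prod_add]
      _ = ∑ A : Finset (Fin n), (PP lo hi ε * ∏ j ∈ A, uu lo hi j (ε j)) * ∏ j ∈ A, φ j ω := by
          rw [Finset.powerset_univ, Finset.mul_sum]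
          apply Finset.sum_congr rfl
          intro A _
          rw [Finset.prod_const_one, mul_one, Finset.prod_mul_distrib]
          ring
  rw [integral_congr_ae (Filter.Eventually.of_forall hpt)]
  rw [integral_finset_sum _ (fun A _ => (hInt A).const_mul _)]
  rw [Tfun, Finset.mul_sum]
  apply Finset.sum_congr rfl
  intro A _
  rw [integral_const_mul]
  ring

end omegaSide

end
end ExtremeAux

open ExtremeAux in

/-- Theorem A of \[Kar4\]. For `Φ : ℝ → [0,∞)` convex and random variables
`A_k ≤ φ_k ≤ B_k` a.s. (`A_k < 0 < B_k`), any integer `d ≤ n` and reals `a_1, …, a_n`, there are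
`{A_k, B_k}`-valued mean-zero `d`-independent random variables `ξ_k` with
`E[Φ(∑ a_k φ_k)] ≤ (1 + μ_d(φ)) E[Φ(∑ a_k ξ_k)]`. -/
theorem extreme_inequality_sums
    {Ω : Type*} [MeasurableSpace Ω] (μ : Measure Ω) [IsProbabilityMeasure μ]
    (n d : ℕ) (hd : 0 < d) (hdn : d ≤ n)
    (Φ : ℝ → ℝ) (hΦconv : ConvexOn ℝ Set.univ Φ) (hΦ0 : ∀ t, 0 ≤ Φ t)
    (φ : Fin n → Ω → ℝ) (hφmeas : ∀ k, Measurable (φ k))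
    (lo hi : Fin n → ℝ) (hlo : ∀ k, lo k < 0) (hhi : ∀ k, 0 < hi k)
    (hbound : ∀ k, ∀ᵐ ω ∂μ, lo k ≤ φ k ω ∧ φ k ω ≤ hi k)
    (a : Fin n → ℝ) :
    ∃ (Ω' : Type) (_ : MeasurableSpace Ω') (μ' : Measure Ω')
      (_ : IsProbabilityMeasure μ') (ξ : Fin n → Ω' → ℝ),
      (∀ k, Measurable (ξ k)) ∧
      (∀ k ω', ξ k ω' = lo k ∨ ξ k ω' = hi k) ∧
      (∀ k, ∫ ω', ξ k ω' ∂μ' = 0) ∧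
      (∀ S : Finset (Fin n), S.card ≤ d →
        iIndepFun (fun i : S => ξ i) μ') ∧
      ∫ ω, Φ (∑ k, a k * φ k ω) ∂μ ≤
        (1 + ∑ A ∈ Finset.univ.filter
              (fun A : Finset (Fin n) => A.Nonempty ∧ A.card ≤ d),
            (∏ j ∈ A, (min (-(lo j)) (hi j))⁻¹) * |∫ ω, ∏ j ∈ A, φ j ω ∂μ|) *
          ∫ ω', Φ (∑ k, a k * ξ k ω') ∂μ' := by
  classical
  set EA : Finset (Fin n) → ℝ := fun A => ∫ ω, ∏ j ∈ A, φ j ω ∂μ with hEA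
  have hEAe : EA ∅ = 1 := by simp [hEA]
  set Q : Cube n → ℝ := fun ε => Qfun lo hi d EA ε with hQdef
  have hw : ∀ ε : Fin n → Bool, ∫ ω, ∏ k, lam lo hi k (φ k ω) (ε k) ∂μ
      = PP lo hi ε * Tfun lo hi EA ε :=
    fun ε => integral_prod_lam hlo hhi μ φ hφmeas hbound ε
  have hae : ∀ᵐ ω ∂μ, ∀ k, lo k ≤ φ k ω ∧ φ k ω ≤ hi k := ae_all_iff.2 hbound
  have hPT : ∀ ε : Fin n → Bool, 0 ≤ PP lo hi ε * Tfun lo hi EA ε := by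
    intro ε
    rw [← hw ε]
    apply integral_nonneg_of_ae
    filter_upwards [hae] with ω hω
    exact Finset.prod_nonneg fun k _ => lam_nonneg hlo hhi k (hω k).1 (hω k).2 _
  have hQ0 : ∀ ε, 0 ≤ Q ε := fun ε => Qfun_nonneg d EA hlo hhi ε (hPT ε)
  have hQ1 : ∑ ε : Cube n, Q ε = 1 := Qfun_sum d EA hlo hhi hEAe
  haveI hprob : IsProbabilityMeasure (cubeMeasure Q) := cubeMeasure_isProb Q hQ0 hQ1
  set M : ℝ := Mconst lo hi d EA with hM
  have hMeq : (∑ A ∈ Finset.univ.filter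
        (fun A : Finset (Fin n) => A.Nonempty ∧ A.card ≤ d),
      (∏ j ∈ A, (min (-(lo j)) (hi j))⁻¹) * |∫ ω, ∏ j ∈ A, φ j ω ∂μ|) = M := by
    rw [hM, Mconst, small]
  refine ⟨Cube n, inferInstance, cubeMeasure Q, hprob,
    fun k ε => vv lo hi k (ε k), ?_, ?_, ?_, ?_, ?_⟩
  · intro k
    exact measurable_from_top
  · intro k ε
    cases hb : ε k
    · exact Or.inl (by simp [vv, hb])
    · exact Or.inr (by simp [vv, hb])
  · intro k
    rw [cubeMeasure_integral Q hQ0 hQ1 (fun ε => vv lo hi k (ε k))]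
    exact Qfun_mean d EA hlo hhi hEAe hd k
  · intro S hS
    exact cube_indep hlo hhi d hd Q hQ0
      (fun K hK f => core_sum d EA hlo hhi hEAe K hK f) S hS
  · -- the main inequality
    rw [hMeq, cubeMeasure_integral Q hQ0 hQ1 (fun ε => Φ (∑ k, a k * vv lo hi k (ε k)))]
    set y : (Fin n → Bool) → ℝ := fun ε => Φ (∑ k, a k * vv lo hi k (ε k)) with hy
    have hΦcont : Continuous Φ := by
      have h := ConvexOn.continuousOn isOpen_univ hΦconv
      rwa [continuousOn_univ] at h
    have hlam_meas : ∀ (ε : Fin n → Bool),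
        Measurable (fun ω => ∏ k, lam lo hi k (φ k ω) (ε k)) := by
      intro ε
      apply Finset.measurable_prod
      intro k _
      cases hb : ε k <;> simp only [lam]
      · exact (measurable_const.sub (hφmeas k)).div_const _
      · exact ((hφmeas k).sub measurable_const).div_const _
    have hwts_int : ∀ ε : Fin n → Bool,
        Integrable (fun ω => ∏ k, lam lo hi k (φ k ω) (ε k)) μ := by
      intro ε
      apply Integrable.mono' (integrable_const (1:ℝ)) (hlam_meas ε).aestronglyMeasurable
      filter_upwards [hae] with ω hω
      rw [Real.norm_eq_abs, abs_of_nonneg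
        (Finset.prod_nonneg fun k _ => lam_nonneg hlo hhi k (hω k).1 (hω k).2 _)]
      exact Finset.prod_le_one
        (fun k _ => lam_nonneg hlo hhi k (hω k).1 (hω k).2 _)
        (fun k _ => lam_le_one hlo hhi k (hω k).1 (hω k).2 _)
    have hG_int : Integrable
        (fun ω => ∑ ε : Fin n → Bool, (∏ k, lam lo hi k (φ k ω) (ε k)) * y ε) μ :=
      integrable_finset_sum _ fun ε _ => (hwts_int ε).mul_const _
    have hf_meas : Measurable (fun ω => Φ (∑ k, a k * φ k ω)) := by
      apply hΦcont.measurable.comp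
      exact Finset.measurable_sum _ fun k _ => (hφmeas k).const_mul _
    have hjen : ∀ᵐ ω ∂μ, Φ (∑ k, a k * φ k ω)
        ≤ ∑ ε : Fin n → Bool, (∏ k, lam lo hi k (φ k ω) (ε k)) * y ε := by
      filter_upwards [hae] with ω hω
      exact jensen_pt hlo hhi Φ hΦconv a (fun k => φ k ω) hω
    have hf_int : Integrable (fun ω => Φ (∑ k, a k * φ k ω)) μ := by
      apply Integrable.mono' (integrable_const (∑ ε : Fin n → Bool, y ε))
        hf_meas.aestronglyMeasurable
      filter_upwards [hae, hjen] with ω hω hj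
      rw [Real.norm_eq_abs, abs_of_nonneg (hΦ0 _)]
      refine hj.trans (Finset.sum_le_sum fun ε _ => ?_)
      have h1 : (∏ k, lam lo hi k (φ k ω) (ε k)) ≤ 1 :=
        Finset.prod_le_one
          (fun k _ => lam_nonneg hlo hhi k (hω k).1 (hω k).2 _)
          (fun k _ => lam_le_one hlo hhi k (hω k).1 (hω k).2 _)
      calc (∏ k, lam lo hi k (φ k ω) (ε k)) * y ε ≤ 1 * y ε :=
            mul_le_mul_of_nonneg_right h1 (hΦ0 _)
        _ = y ε := one_mul _
    calc ∫ ω, Φ (∑ k, a k * φ k ω) ∂μ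
        ≤ ∫ ω, ∑ ε : Fin n → Bool, (∏ k, lam lo hi k (φ k ω) (ε k)) * y ε ∂μ :=
          integral_mono_ae hf_int hG_int hjen
      _ = ∑ ε : Fin n → Bool, (PP lo hi ε * Tfun lo hi EA ε) * y ε := by
          rw [integral_finset_sum _ fun ε _ => (hwts_int ε).mul_const _]
          exact Finset.sum_congr rfl fun ε _ => by rw [integral_mul_const, hw ε]
      _ ≤ ∑ ε : Fin n → Bool, ((1 + M) * Qfun lo hi d EA ε) * y ε := by
          apply Finset.sum_le_sum
          intro ε _
          exact mul_le_mul_of_nonneg_right (le_Qfun d EA hlo hhi ε) (hΦ0 _)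
      _ = (1 + M) * ∑ ε : Fin n → Bool, Qfun lo hi d EA ε * y ε := by
          rw [Finset.mul_sum]
          exact Finset.sum_congr rfl fun ε _ => by ring
      _ = (1 + M) * ∑ ε : Cube n, Q ε * y ε := rfl
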